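/- Let X be a set with a distance function d : X × X → ℕ ∪ {∞} which is symmetric, satisfies d(x,x) = 0, and the triangle inequality. Let f : ℕ × ℕ → ℕ (written f_n(r)) be nondecreasing in each argument and satisfy 2·f_{n₁}(r₁) + f_{n₂}(r₂) ≤ f_{n₁+n₂+1}(r₁+r₂). Given points a₀,…,a_{m-1} ∈ X and radii r₀,…,r_{m-1} ∈ ℕ, there exist a subset w ⊆ {0,…,m-1}, natural numbers n_i for i ∈ w with Σ_{i∈w} n_i ≤ m − |w|, and a retraction g : {0,…,m-1} → w (g is the identity on w) such that the balls N_i = {x ∈ X : d(x, a_i) ≤ f_{n_i}(Σ{r_j : g(j) = i})} for i ∈ w are pairwise disjoint and every a_j (j < m) lies in the ball N_{g'} for some i ∈ w, i.e. ⋃_{i∈w} N_i ⊇ {a₀,…,a_{m-1}}. -/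

import Mathlib

open scoped BigOperators

theorem stmt_3 {X : Type*} (d : X → X → ℕ∞)
    (hsymm : ∀ x y, d x y = d y x) (hself : ∀ x, d x x = 0)
    (htri : ∀ x y z, d x z ≤ d x y + d y z)
    (f : ℕ → ℕ → ℕ)
    (hmono_n : ∀ r : ℕ, Monotone (fun n => f n r))
    (hmono_r : ∀ n : ℕ, Monotone (f n))
    (hf : ∀ n₁ n₂ r₁ r₂ : ℕ, 2 * f n₁ r₁ + f n₂ r₂ ≤ f (n₁ + n₂ + 1) (r₁ + r₂))
    (m : ℕ) (a : Fin m → X) (r : Fin m → ℕ) :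
    ∃ (w : Finset (Fin m)) (nn : Fin m → ℕ) (g : Fin m → Fin m),
      (∀ j, g j ∈ w) ∧ (∀ i ∈ w, g i = i) ∧
      (∑ i ∈ w, nn i) ≤ m - w.card ∧
      (∀ i ∈ w, ∀ i' ∈ w, i ≠ i' →
        Disjoint
          {x : X | d x (a i) ≤
            (f (nn i) (∑ j ∈ Finset.univ.filter (fun j => g j = i), r j) : ℕ∞)}
          {x : X | d x (a i') ≤
            (f (nn i') (∑ j ∈ Finset.univ.filter (fun j => g j = i'), r j) : ℕ∞)}) ∧
      (∀ j : Fin m, ∃ i ∈ w,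
        d (a j) (a i) ≤
          (f (nn i) (∑ j' ∈ Finset.univ.filter (fun j' => g j' = i), r j') : ℕ∞)) := by
  suffices h : ∀ N (w : Finset (Fin m)) (nn : Fin m → ℕ) (g : Fin m → Fin m),
      w.card ≤ N →
      (∀ j, g j ∈ w) → (∀ i ∈ w, g i = i) →
      (∑ i ∈ w, nn i) + w.card ≤ m →
      (∀ j : Fin m, d (a j) (a (g j)) ≤
        (f (nn (g j)) (∑ j' ∈ Finset.univ.filter (fun j' => g j' = g j), r j') : ℕ∞)) →
      ∃ (w' : Finset (Fin m)) (nn' : Fin m → ℕ) (g' : Fin m → Fin m),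
        (∀ j, g' j ∈ w') ∧ (∀ i ∈ w', g' i = i) ∧
        (∑ i ∈ w', nn' i) ≤ m - w'.card ∧
        (∀ i ∈ w', ∀ i'' ∈ w', i ≠ i'' →
          Disjoint
            {x : X | d x (a i) ≤
              (f (nn' i) (∑ j ∈ Finset.univ.filter (fun j => g' j = i), r j) : ℕ∞)}
            {x : X | d x (a i'') ≤
              (f (nn' i'') (∑ j ∈ Finset.univ.filter (fun j => g' j = i''), r j) : ℕ∞)}) ∧
        (∀ j : Fin m, ∃ i ∈ w',
          d (a j) (a i) ≤
            (f (nn' i) (∑ j' ∈ Finset.univ.filter (fun j' => g' j' = i), r j') : ℕ∞)) by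
    refine h m Finset.univ (fun _ => 0) id (by simp) (fun _ => Finset.mem_univ _)
      (fun _ _ => rfl) (by simp) (fun j => by simp [hself])
  intro N
  induction N with
  | zero =>
    intro w nn g hcard hgw hgfix hsum hcov
    have hw : w = ∅ := Finset.card_eq_zero.mp (Nat.le_zero.mp hcard)
    subst hw
    exact ⟨∅, nn, g, hgw, by simp, by simp, by simp,
      fun j => (Finset.notMem_empty _ (hgw j)).elim⟩
  | succ N ih =>
    intro w nn g hcard hgw hgfix hsum hcov
    by_cases hdisj : ∀ i ∈ w, ∀ i'' ∈ w, i ≠ i'' →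
        Disjoint
          {x : X | d x (a i) ≤
            (f (nn i) (∑ j ∈ Finset.univ.filter (fun j => g j = i), r j) : ℕ∞)}
          {x : X | d x (a i'') ≤
            (f (nn i'') (∑ j ∈ Finset.univ.filter (fun j => g j = i''), r j) : ℕ∞)}
    · exact ⟨w, nn, g, hgw, hgfix, Nat.le_sub_of_add_le hsum, hdisj,
        fun j => ⟨g j, hgw j, hcov j⟩⟩
    · push_neg at hdisj
      obtain ⟨i, hi, i', hi', hne, hnd⟩ := hdisj
      obtain ⟨x, hxi, hxi'⟩ := Set.not_disjoint_iff.mp hnd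
      rw [Set.mem_setOf_eq] at hxi hxi'
      set Ri := ∑ j ∈ Finset.univ.filter (fun j => g j = i), r j with hRi_def
      set Ri' := ∑ j ∈ Finset.univ.filter (fun j => g j = i'), r j with hRi'_def
      set g' : Fin m → Fin m := fun j => if g j = i' then i else g j with hg'_def
      set nn' : Fin m → ℕ := Function.update nn i (nn i + nn i' + 1) with hnn'_def
      have hi_mem : i ∈ w.erase i' := Finset.mem_erase.mpr ⟨hne, hi⟩
      -- filter lemmas
      have hfilter_ne : ∀ k, k ≠ i → k ≠ i' →
          Finset.univ.filter (fun j => g' j = k) = Finset.univ.filter (fun j => g j = k) := by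
        intro k hk hk'
        ext j
        simp only [Finset.mem_filter, Finset.mem_univ, true_and, hg'_def]
        split_ifs with h
        · simp [h, Ne.symm hk, Ne.symm hk']
        · exact Iff.rfl
      have hfilter_i : Finset.univ.filter (fun j => g' j = i) =
          Finset.univ.filter (fun j => g j = i) ∪ Finset.univ.filter (fun j => g j = i') := by
        ext j
        simp only [Finset.mem_filter, Finset.mem_union, Finset.mem_univ, true_and, hg'_def]
        split_ifs with h
        · simp [h]
        · exact (or_iff_left h).symm
      have hdisjf : Disjoint (Finset.univ.filter (fun j => g j = i))
          (Finset.univ.filter (fun j => g j = i')) := by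
        rw [Finset.disjoint_left]
        intro j hj hj'
        simp only [Finset.mem_filter] at hj hj'
        exact hne (hj.2 ▸ hj'.2)
      have hRsum : ∑ j ∈ Finset.univ.filter (fun j => g' j = i), r j = Ri + Ri' := by
        rw [hfilter_i, Finset.sum_union hdisjf]
      have hnn'i : nn' i = nn i + nn i' + 1 := Function.update_self _ _ _
      -- properties of g'
      have hgw' : ∀ j, g' j ∈ w.erase i' := by
        intro j
        simp only [hg'_def]
        split_ifs with h
        · exact hi_mem
        · exact Finset.mem_erase.mpr ⟨h, hgw j⟩
      have hgfix' : ∀ k ∈ w.erase i', g' k = k := by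
        intro k hk
        obtain ⟨hk1, hk2⟩ := Finset.mem_erase.mp hk
        have : g k = k := hgfix k hk2
        simp only [hg'_def, this, if_neg hk1]
      -- sum
      have hsum' : (∑ k ∈ w.erase i', nn' k) + (w.erase i').card ≤ m := by
        have h1 : ∑ k ∈ w.erase i', nn' k
            = (nn i + nn i' + 1) + ∑ k ∈ (w.erase i').erase i, nn k := by
          rw [hnn'_def, Finset.sum_update_of_mem hi_mem,
            Finset.sdiff_singleton_eq_erase]
        have h2 : ∑ k ∈ w, nn k = nn i' + (nn i + ∑ k ∈ (w.erase i').erase i, nn k) := by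
          rw [← Finset.add_sum_erase _ _ hi', ← Finset.add_sum_erase _ _ hi_mem]
        have h3 : (w.erase i').card + 1 = w.card := Finset.card_erase_add_one hi'
        omega
      -- coverage
      have hcov' : ∀ j : Fin m, d (a j) (a (g' j)) ≤
          (f (nn' (g' j)) (∑ j' ∈ Finset.univ.filter (fun j' => g' j' = g' j), r j') : ℕ∞) := by
        intro j
        by_cases h : g j = i'
        · have hg'j : g' j = i := by simp [hg'_def, h]
          rw [hg'j, hnn'i, hRsum]
          have hcovj : d (a j) (a i') ≤ (f (nn i') Ri' : ℕ∞) := by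
            have := hcov j
            rw [h] at this
            simpa only [h] using this
          have hA : d (a i') x ≤ (f (nn i') Ri' : ℕ∞) := by
            rw [hsymm]; exact hxi'
          have key : 2 * f (nn i') Ri' + f (nn i) Ri ≤ f (nn i + nn i' + 1) (Ri + Ri') := by
            have := hf (nn i') (nn i) Ri' Ri
            rw [show nn i' + nn i + 1 = nn i + nn i' + 1 by omega, add_comm Ri' Ri] at this
            exact this
          calc d (a j) (a i) ≤ d (a j) (a i') + d (a i') (a i) := htri _ _ _
            _ ≤ d (a j) (a i') + (d (a i') x + d x (a i)) := by
                exact add_le_add_right (htri _ _ _) _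
            _ ≤ (f (nn i') Ri' : ℕ∞) + ((f (nn i') Ri' : ℕ∞) + (f (nn i) Ri : ℕ∞)) :=
                add_le_add hcovj (add_le_add hA hxi)
            _ = ((2 * f (nn i') Ri' + f (nn i) Ri : ℕ) : ℕ∞) := by push_cast; ring
            _ ≤ (f (nn i + nn i' + 1) (Ri + Ri') : ℕ∞) := Nat.cast_le.mpr key
        · have hg'j : g' j = g j := by simp [hg'_def, h]
          rw [hg'j]
          by_cases h2 : g j = i
          · rw [h2, hnn'i, hRsum]
            have hcovj : d (a j) (a i) ≤ (f (nn i) Ri : ℕ∞) := by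
              have := hcov j
              rw [h2] at this
              simpa only [h2] using this
            refine hcovj.trans (Nat.cast_le.mpr ?_)
            calc f (nn i) Ri ≤ f (nn i) (Ri + Ri') := hmono_r _ (Nat.le_add_right _ _)
              _ ≤ f (nn i + nn i' + 1) (Ri + Ri') := hmono_n _ (by omega)
          · have hup : nn' (g j) = nn (g j) := Function.update_of_ne h2 _ _
            rw [hup, hfilter_ne (g j) h2 h]
            exact hcov j
      -- apply IH
      have hcard' : (w.erase i').card ≤ N := by
        have h3 : (w.erase i').card + 1 = w.card := Finset.card_erase_add_one hi'
        omega
      exact ih (w.erase i') nn' g' hcard' hgw' hgfix' hsum' hcov'
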